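/- Let Q : [0,R] → ℝ be continuous, nonnegative, twice differentiable on (0,R), with Q(0) = 0 and Q(R) ≤ 0, and suppose Q''(r) + Q'(r)/r − Q(r)/r² ≥ 0 on (0,R). Then Q ≤ 0 on [0,R] (hence Q ≡ 0). -/
import Mathlib


/-- Maximum principle for the operator `L[Q] = Q'' + Q'/r − Q/r²` on `(0,R)`:
a nonnegative continuous subsolution (`L[Q] ≥ 0`) which is `C²` on `(0,R)` with `Q(0) = 0`
and `Q(R) ≤ 0` satisfies `Q ≤ 0` on `[0,R]` (hence `Q ≡ 0`). -/
theorem stmt3 (R : ℝ) (hR : 0 < R) (Q : ℝ → ℝ)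
    (hcont : ContinuousOn Q (Set.Icc 0 R))
    (hC2 : ContDiffOn ℝ 2 Q (Set.Ioo 0 R))
    (hnonneg : ∀ r ∈ Set.Icc 0 R, 0 ≤ Q r)
    (hQ0 : Q 0 = 0) (hQR : Q R ≤ 0)
    (hsub : ∀ r ∈ Set.Ioo (0:ℝ) R,
      0 ≤ deriv (deriv Q) r + deriv Q r / r - Q r / r^2) :
    ∀ r ∈ Set.Icc 0 R, Q r ≤ 0 := by
  -- maximum of Q on [0,R]
  obtain ⟨c, hcmem, hcmax⟩ :=
    (isCompact_Icc (a := (0:ℝ)) (b := R)).exists_isMaxOn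
      (Set.nonempty_Icc.2 hR.le) hcont
  by_cases hM : Q c ≤ 0
  · intro r hr; exact le_trans (hcmax hr) hM
  push_neg at hM
  exfalso
  have hQRz : Q R = 0 := le_antisymm hQR (hnonneg R ⟨hR.le, le_rfl⟩)
  have hc0 : c ≠ 0 := by rintro rfl; rw [hQ0] at hM; exact lt_irrefl 0 hM
  have hcR : c ≠ R := by rintro rfl; rw [hQRz] at hM; exact lt_irrefl 0 hM
  have hcIoo : c ∈ Set.Ioo (0:ℝ) R :=
    ⟨lt_of_le_of_ne hcmem.1 (Ne.symm hc0), lt_of_le_of_ne hcmem.2 hcR⟩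
  have hopen : IsOpen (Set.Ioo (0:ℝ) R) := isOpen_Ioo
  have hdiff : DifferentiableOn ℝ Q (Set.Ioo 0 R) := hC2.differentiableOn (by norm_num)
  have hlocmax : IsLocalMax Q c :=
    hcmax.isLocalMax (Icc_mem_nhds hcIoo.1 hcIoo.2)
  have hd0 : deriv Q c = 0 := hlocmax.deriv_eq_zero
  -- second derivative at c is positive
  have hD : deriv Q c / c - Q c / c ^ 2 = - (Q c / c ^ 2) := by rw [hd0]; ring
  have hpos : 0 < deriv (deriv Q) c := by
    have := hsub c hcIoo
    have h2 : 0 < Q c / c ^ 2 := div_pos hM (by positivity)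
    nlinarith [this, hD]
  -- deriv Q is differentiable at c, with derivative deriv (deriv Q) c
  have hC1 : ContDiffOn ℝ 1 (deriv Q) (Set.Ioo 0 R) :=
    hC2.deriv_of_isOpen hopen (by norm_num)
  have hdQ : DifferentiableAt ℝ (deriv Q) c := by
    have := (hC1.differentiableOn (by norm_num)) c hcIoo
    exact this.differentiableAt (hopen.mem_nhds hcIoo)
  have hder : HasDerivAt (deriv Q) (deriv (deriv Q) c) c := hdQ.hasDerivAt
  -- eventually deriv Q > 0 to the right of c
  have hslope : Filter.Tendsto (slope (deriv Q) c) (nhdsWithin c {c}ᶜ)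
      (nhds (deriv (deriv Q) c)) := hasDerivAt_iff_tendsto_slope.1 hder
  have hev : ∀ᶠ x in nhdsWithin c (Set.Ioi c), 0 < deriv Q x := by
    have h1 : ∀ᶠ x in nhdsWithin c {c}ᶜ, 0 < slope (deriv Q) c x :=
      hslope.eventually (eventually_gt_nhds hpos)
    have h2 : ∀ᶠ x in nhdsWithin c (Set.Ioi c), 0 < slope (deriv Q) c x :=
      h1.filter_mono (nhdsWithin_mono c (fun x hx => ne_of_gt hx))
    filter_upwards [h2, self_mem_nhdsWithin] with x hx hx'
    have hxc : 0 < x - c := sub_pos.2 hx'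
    have : 0 < (deriv Q x - deriv Q c) / (x - c) := by
      simpa [slope_def_field, div_eq_iff, hd0] using hx
    have := mul_pos this hxc
    rw [div_mul_cancel₀ _ (ne_of_gt hxc)] at this
    rw [hd0] at this
    linarith
  obtain ⟨u, hu, husub⟩ := mem_nhdsGT_iff_exists_Ioo_subset.1 hev
  -- pick b with c < b < min u R
  set b := (c + min u R) / 2 with hb
  have hcu : c < min u R := lt_min hu hcIoo.2
  have hcb : c < b := by simp only [hb]; linarith
  have hbu : b < min u R := by simp only [hb]; linarith
  have hbR : b < R := lt_of_lt_of_le hbu (min_le_right _ _)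
  have hIccsub : Set.Icc c b ⊆ Set.Icc 0 R :=
    Set.Icc_subset_Icc hcIoo.1.le hbR.le
  have hIoosub : Set.Ioo c b ⊆ Set.Ioo 0 R := fun x hx =>
    ⟨lt_trans hcIoo.1 hx.1, lt_trans hx.2 hbR⟩
  -- Q strictly increasing on [c, b]
  have hmono : StrictMonoOn Q (Set.Icc c b) := by
    apply strictMonoOn_of_deriv_pos (convex_Icc c b) (hcont.mono hIccsub)
    intro x hx
    rw [interior_Icc] at hx
    have hbu' : b < u := lt_of_lt_of_le hbu (min_le_left _ _)
    exact husub ⟨hx.1, lt_trans hx.2 hbu'⟩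
  have hQb : Q c < Q b := hmono ⟨le_rfl, hcb.le⟩ ⟨hcb.le, le_rfl⟩ hcb
  exact absurd (hcmax ⟨le_trans hcIoo.1.le hcb.le, hbR.le⟩) (not_le.2 hQb)
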